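/- Let λ > 0 and let f : ℝ² → {-1, 1} be measurable with f(x + λ k) = f(x) for all x ∈ ℝ² and k ∈ ℤ², and ∫_{[0,λ)²} f(x) dx = 0. Then for every x ∈ ℝ², taking ε = √2 λ, the ball B_ε(x) satisfies (1/(4π)) ℒ²(B_ε(x)) ≤ ℒ²({y ∈ B_ε(x) : f(y) = 1}) ≤ (1 - 1/(4π)) ℒ²(B_ε(x)), where ℒ² denotes two-dimensional Lebesgue measure. -/

import Mathlib

open MeasureTheory

noncomputable def myB (lam : ℝ) (hlam : 0 < lam) : Module.Basis (Fin 2) ℝ (EuclideanSpace ℝ (Fin 2)) :=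
  (PiLp.basisFun 2 ℝ (Fin 2)).unitsSMul fun _ => Units.mk0 lam hlam.ne'

lemma myB_repr (lam : ℝ) (hlam : 0 < lam) (x : EuclideanSpace ℝ (Fin 2)) (i : Fin 2) :
    (myB lam hlam).repr x i = x i / lam := by
  rw [myB, Module.Basis.repr_unitsSMul]
  simp [PiLp.basisFun_repr, Units.smul_def, div_eq_inv_mul]

lemma myB_fd (lam : ℝ) (hlam : 0 < lam) :
    ZSpan.fundamentalDomain (myB lam hlam)
      = {x : EuclideanSpace ℝ (Fin 2) | ∀ i, 0 ≤ x i ∧ x i < lam} := by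
  ext x
  simp only [ZSpan.mem_fundamentalDomain, myB_repr lam hlam, Set.mem_Ico, Set.mem_setOf_eq]
  refine forall_congr' fun i => ?_
  rw [le_div_iff₀ hlam, div_lt_one hlam, zero_mul]

lemma myB_span (lam : ℝ) (hlam : 0 < lam) (g : EuclideanSpace ℝ (Fin 2))
    (hg : g ∈ Submodule.span ℤ (Set.range (myB lam hlam))) :
    ∃ k : Fin 2 → ℤ, g = lam • ((WithLp.equiv 2 (Fin 2 → ℝ)).symm fun i => (k i : ℝ)) := by
  obtain ⟨k, hk⟩ := (Submodule.mem_span_range_iff_exists_fun ℤ).mp hg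
  refine ⟨k, ?_⟩
  rw [← hk]
  have h0 : ((WithLp.equiv 2 (Fin 2 → ℝ)).symm fun i => (k i : ℝ))
      = ∑ i, (k i : ℝ) • (PiLp.basisFun 2 ℝ (Fin 2)) i := by
    have := (PiLp.basisFun 2 ℝ (Fin 2)).sum_repr
      ((WithLp.equiv 2 (Fin 2 → ℝ)).symm fun i => (k i : ℝ))
    rw [← this]
    simp [PiLp.basisFun_repr]
  rw [h0, Finset.smul_sum]
  refine Finset.sum_congr rfl fun i _ => ?_
  rw [smul_comm, myB]
  simp [Module.Basis.unitsSMul_apply, Units.smul_def, Int.cast_smul_eq_zsmul]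

lemma vol_D (lam : ℝ) (hlam : 0 < lam) :
    volume {x : EuclideanSpace ℝ (Fin 2) | ∀ i, 0 ≤ x i ∧ x i < lam}
      = ENNReal.ofReal (lam ^ 2) := by
  have h : {x : EuclideanSpace ℝ (Fin 2) | ∀ i, 0 ≤ x i ∧ x i < lam}
      = (MeasurableEquiv.toLp 2 (Fin 2 → ℝ)).symm ⁻¹'
        (Set.univ.pi fun _ : Fin 2 => Set.Ico (0:ℝ) lam) := by
    ext x
    simp [MeasurableEquiv.coe_toLp_symm, Set.mem_pi, Set.mem_Ico]
  rw [h, MeasurePreserving.measure_preimage (EuclideanSpace.volume_preserving_symm_measurableEquiv_toLp (Fin 2))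
    ((MeasurableSet.univ_pi fun _ => measurableSet_Ico).nullMeasurableSet)]
  rw [volume_pi_pi]
  simp [Real.volume_Ico, Finset.prod_const, ← ENNReal.ofReal_pow hlam.le, sq]

lemma halfA (lam : ℝ) (hlam : 0 < lam) (f : EuclideanSpace ℝ (Fin 2) → ℝ)
    (hmeas : Measurable f) (hpm : ∀ x, f x = 1 ∨ f x = -1)
    (hmean : ∫ x in {x : EuclideanSpace ℝ (Fin 2) | ∀ i, 0 ≤ x i ∧ x i < lam}, f x = 0) :
    (volume ({y | f y = 1} ∩ {x : EuclideanSpace ℝ (Fin 2) | ∀ i, 0 ≤ x i ∧ x i < lam})).toReal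
      = lam ^ 2 / 2 := by
  set D := {x : EuclideanSpace ℝ (Fin 2) | ∀ i, 0 ≤ x i ∧ x i < lam} with hDdef
  set A := {y | f y = 1} with hAdef
  have hA : MeasurableSet A := hmeas (measurableSet_singleton 1)
  have hDfin : volume D ≠ ⊤ := by rw [vol_D lam hlam]; exact ENNReal.ofReal_ne_top
  have hconst : IntegrableOn (fun _ : EuclideanSpace ℝ (Fin 2) => (1:ℝ)) D volume :=
    integrableOn_const hDfin
  have hind : IntegrableOn (A.indicator fun _ => (2:ℝ)) D volume :=
    (integrableOn_const hDfin :
      IntegrableOn (fun _ : EuclideanSpace ℝ (Fin 2) => (2:ℝ)) D volume).indicator hA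
  have hfeq : f = fun x => A.indicator (fun _ => (2:ℝ)) x - 1 := by
    funext x
    rcases hpm x with h | h
    · have : x ∈ A := h
      simp [Set.indicator_of_mem this, h]; norm_num
    · have : x ∉ A := by norm_num [hAdef, h]
      simp [Set.indicator_of_notMem this, h]
  rw [hfeq] at hmean
  rw [integral_sub hind hconst, integral_indicator hA, setIntegral_const,
    setIntegral_const, measureReal_restrict_apply hA, measureReal_def, measureReal_def] at hmean
  have hDr : (volume D).toReal = lam ^ 2 := by
    rw [vol_D lam hlam, ENNReal.toReal_ofReal (sq_nonneg lam)]
  rw [hDr] at hmean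
  simp only [smul_eq_mul, mul_one] at hmean
  linarith

lemma square_transfer (lam : ℝ) (hlam : 0 < lam) (A : Set (EuclideanSpace ℝ (Fin 2)))
    (hA : MeasurableSet A)
    (hinv : ∀ (k : Fin 2 → ℤ) (y : EuclideanSpace ℝ (Fin 2)),
      y + lam • ((WithLp.equiv 2 (Fin 2 → ℝ)).symm fun i => (k i : ℝ)) ∈ A ↔ y ∈ A)
    (v : EuclideanSpace ℝ (Fin 2)) :
    volume (A ∩ ((fun y => y - v) ⁻¹'
        {x : EuclideanSpace ℝ (Fin 2) | ∀ i, 0 ≤ x i ∧ x i < lam}))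
      = volume (A ∩ {x : EuclideanSpace ℝ (Fin 2) | ∀ i, 0 ≤ x i ∧ x i < lam}) := by
  set b := myB lam hlam with hb
  set D := {x : EuclideanSpace ℝ (Fin 2) | ∀ i, 0 ≤ x i ∧ x i < lam} with hD
  set Q : Set (EuclideanSpace ℝ (Fin 2)) := (fun y => y - v) ⁻¹' D with hQ
  have hDmeas : MeasurableSet D := by
    have := ZSpan.fundamentalDomain_measurableSet b
    rwa [hb, myB_fd lam hlam] at this
  have hQmeas : MeasurableSet Q := hDmeas.preimage (measurable_id.sub_const v)
  have hDfd : IsAddFundamentalDomain (Submodule.span ℤ (Set.range ⇑b)).toAddSubgroup D volume := by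
    have := ZSpan.isAddFundamentalDomain' b volume
    rwa [show ZSpan.fundamentalDomain b = D from by rw [hb, myB_fd lam hlam]] at this
  have hQfd : IsAddFundamentalDomain (Submodule.span ℤ (Set.range b)).toAddSubgroup Q volume := by
    refine IsAddFundamentalDomain.mk' hQmeas.nullMeasurableSet fun x => ?_
    have H := ZSpan.exist_unique_vadd_mem_fundamentalDomain b (x - v)
    rw [myB_fd lam hlam] at H
    refine (existsUnique_congr fun g => ?_).mpr H
    show ((g : EuclideanSpace ℝ (Fin 2)) + x) - v ∈ D ↔ (g : EuclideanSpace ℝ (Fin 2)) + (x - v) ∈ D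
    rw [add_sub_assoc]
  haveI : Countable (Submodule.span ℤ (Set.range b)).toAddSubgroup :=
    inferInstanceAs (Countable (Submodule.span ℤ (Set.range b)))
  have hAinv : ∀ g : (Submodule.span ℤ (Set.range b)).toAddSubgroup,
      (fun x => g +ᵥ x) ⁻¹' A = A := by
    intro g
    obtain ⟨k, hk⟩ := myB_span lam hlam g g.2
    ext y
    have h1 : (g : EuclideanSpace ℝ (Fin 2)) + y
        = y + lam • ((WithLp.equiv 2 (Fin 2 → ℝ)).symm fun i => (k i : ℝ)) := by
      rw [add_comm, hk]
    show (g : EuclideanSpace ℝ (Fin 2)) + y ∈ A ↔ y ∈ A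
    rw [h1]
    exact hinv k y
  exact hQfd.measure_set_eq hDfd hA hAinv


/-- A `±1`-valued function on `ℝ²` that is `λℤ²`-periodic and has zero mean
over the period cell `[0,λ)²` is geometrically mixed at scale `ε = √2 λ` with `κ = 1/(4π)`:
every Euclidean ball of radius `ε` contains a proportion between `1/(4π)` and `1 - 1/(4π)` of
the level set `{f = 1}`. -/
theorem stmt7 (lam : ℝ) (hlam : 0 < lam) (f : EuclideanSpace ℝ (Fin 2) → ℝ)
    (hmeas : Measurable f) (hpm : ∀ x, f x = 1 ∨ f x = -1)
    (hper : ∀ (x : EuclideanSpace ℝ (Fin 2)) (k : Fin 2 → ℤ),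
      f (x + lam • ((WithLp.equiv 2 (Fin 2 → ℝ)).symm fun i => (k i : ℝ))) = f x)
    (hmean : ∫ x in {x : EuclideanSpace ℝ (Fin 2) | ∀ i, 0 ≤ x i ∧ x i < lam}, f x = 0) :
    ∀ x : EuclideanSpace ℝ (Fin 2),
      (1 / (4 * Real.pi)) * (volume (Metric.ball x (Real.sqrt 2 * lam))).toReal
          ≤ (volume ({y | f y = 1} ∩ Metric.ball x (Real.sqrt 2 * lam))).toReal ∧
        (volume ({y | f y = 1} ∩ Metric.ball x (Real.sqrt 2 * lam))).toReal
          ≤ (1 - 1 / (4 * Real.pi)) * (volume (Metric.ball x (Real.sqrt 2 * lam))).toReal := by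
  intro x
  set D := {x : EuclideanSpace ℝ (Fin 2) | ∀ i, 0 ≤ x i ∧ x i < lam} with hDdef
  set A := {y | f y = 1} with hAdef
  set r := Real.sqrt 2 * lam with hrdef
  set B := Metric.ball x r with hBdef
  have hA : MeasurableSet A := hmeas (measurableSet_singleton 1)
  have hAinv : ∀ (k : Fin 2 → ℤ) (y : EuclideanSpace ℝ (Fin 2)),
      y + lam • ((WithLp.equiv 2 (Fin 2 → ℝ)).symm fun i => (k i : ℝ)) ∈ A ↔ y ∈ A := by
    intro k y
    simp only [hAdef, Set.mem_setOf_eq, hper y k]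
  have hAcinv : ∀ (k : Fin 2 → ℤ) (y : EuclideanSpace ℝ (Fin 2)),
      y + lam • ((WithLp.equiv 2 (Fin 2 → ℝ)).symm fun i => (k i : ℝ)) ∈ Aᶜ ↔ y ∈ Aᶜ := by
    intro k y
    simp only [Set.mem_compl_iff]
    exact not_congr (hAinv k y)
  -- the translated square
  set v : EuclideanSpace ℝ (Fin 2) :=
    x - (WithLp.equiv 2 (Fin 2 → ℝ)).symm (fun _ => lam / 2) with hvdef
  set Q : Set (EuclideanSpace ℝ (Fin 2)) := (fun y => y - v) ⁻¹' D with hQdef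
  have hQsub : Q ⊆ B := by
    intro y hy
    have hy' : ∀ i, 0 ≤ (y - v) i ∧ (y - v) i < lam := hy
    have hcoord : ∀ i, |y i - x i| ≤ lam / 2 := by
      intro i
      have h1 : (y - v) i = y i - v i := by simp
      have h2 : v i = x i - lam / 2 := by simp [hvdef]
      have := hy' i
      rw [h1, h2] at this
      rw [abs_le]
      constructor <;> linarith [this.1, this.2]
    have hdist : dist y x ≤ lam := by
      rw [EuclideanSpace.dist_eq]
      have hterm : ∀ i : Fin 2, dist (y i) (x i) ^ 2 ≤ (lam / 2) ^ 2 := by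
        intro i
        rw [Real.dist_eq]
        exact sq_le_sq' (by linarith [abs_nonneg (y i - x i)]) (hcoord i)
      have hsum : (∑ i, dist (y i) (x i) ^ 2) ≤ lam ^ 2 := by
        have h1 : (∑ i, dist (y i) (x i) ^ 2) ≤ ∑ _i : Fin 2, (lam / 2) ^ 2 :=
          Finset.sum_le_sum fun i _ => hterm i
        have h2 : (∑ _i : Fin 2, (lam / 2) ^ 2) = 2 * (lam / 2) ^ 2 := by
          simp [Finset.sum_const]
        nlinarith
      have h3 : Real.sqrt (∑ i, dist (y i) (x i) ^ 2) ≤ Real.sqrt (lam ^ 2) :=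
        Real.sqrt_le_sqrt hsum
      rwa [Real.sqrt_sq hlam.le] at h3
    have hlt : lam < r := by
      have h2 : (1 : ℝ) < Real.sqrt 2 := by
        rw [show (1:ℝ) = Real.sqrt 1 from (Real.sqrt_one).symm]
        exact Real.sqrt_lt_sqrt (by norm_num) (by norm_num)
      nlinarith
    exact Metric.mem_ball.mpr (lt_of_le_of_lt hdist hlt)
  -- measure transfers
  have hQA : volume (A ∩ Q) = volume (A ∩ D) := square_transfer lam hlam A hA hAinv v
  have hQAc : volume (Aᶜ ∩ Q) = volume (Aᶜ ∩ D) := square_transfer lam hlam Aᶜ hA.compl hAcinv v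
  have hADr : (volume (A ∩ D)).toReal = lam ^ 2 / 2 := halfA lam hlam f hmeas hpm hmean
  have hDfin : volume D ≠ ⊤ := by rw [hDdef, vol_D lam hlam]; exact ENNReal.ofReal_ne_top
  have hDr : (volume D).toReal = lam ^ 2 := by
    rw [hDdef, vol_D lam hlam, ENNReal.toReal_ofReal (sq_nonneg lam)]
  have hAcD : (volume (Aᶜ ∩ D)).toReal = lam ^ 2 / 2 := by
    have hsplit : volume (A ∩ D) + volume (Aᶜ ∩ D) = volume D := by
      rw [Set.inter_comm A D, Set.inter_comm Aᶜ D, ← Set.diff_eq]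
      exact measure_inter_add_diff D hA
    have hfin1 : volume (A ∩ D) ≠ ⊤ :=
      ne_top_of_le_ne_top hDfin (measure_mono Set.inter_subset_right)
    have hfin2 : volume (Aᶜ ∩ D) ≠ ⊤ :=
      ne_top_of_le_ne_top hDfin (measure_mono Set.inter_subset_right)
    have h := congrArg ENNReal.toReal hsplit
    rw [ENNReal.toReal_add hfin1 hfin2, hADr, hDr] at h
    linarith
  -- ball volume
  have hBvol : (volume B).toReal = 2 * Real.pi * lam ^ 2 := by
    rw [hBdef, hrdef, EuclideanSpace.volume_ball]
    simp only [Fintype.card_fin]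
    norm_num [Real.Gamma_two]
    rw [ENNReal.toReal_ofReal hlam.le,
      mul_pow, Real.sq_sqrt (by norm_num : (0:ℝ) ≤ 2), Real.sq_sqrt Real.pi_nonneg]
    ring
  have hBfin : volume B ≠ ⊤ := by
    rw [hBdef]; exact (measure_ball_lt_top).ne
  have hfinAB : volume (A ∩ B) ≠ ⊤ :=
    ne_top_of_le_ne_top hBfin (measure_mono Set.inter_subset_right)
  have hfinAcB : volume (Aᶜ ∩ B) ≠ ⊤ :=
    ne_top_of_le_ne_top hBfin (measure_mono Set.inter_subset_right)
  have hmono1 : lam ^ 2 / 2 ≤ (volume (A ∩ B)).toReal := by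
    have h1 : volume (A ∩ Q) ≤ volume (A ∩ B) :=
      measure_mono (Set.inter_subset_inter_right _ hQsub)
    calc lam ^ 2 / 2 = (volume (A ∩ D)).toReal := hADr.symm
      _ = (volume (A ∩ Q)).toReal := by rw [hQA]
      _ ≤ _ := ENNReal.toReal_mono hfinAB h1
  have hmono2 : lam ^ 2 / 2 ≤ (volume (Aᶜ ∩ B)).toReal := by
    have h1 : volume (Aᶜ ∩ Q) ≤ volume (Aᶜ ∩ B) :=
      measure_mono (Set.inter_subset_inter_right _ hQsub)
    calc lam ^ 2 / 2 = (volume (Aᶜ ∩ D)).toReal := hAcD.symm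
      _ = (volume (Aᶜ ∩ Q)).toReal := by rw [hQAc]
      _ ≤ _ := ENNReal.toReal_mono hfinAcB h1
  have hsplitB : (volume (A ∩ B)).toReal + (volume (Aᶜ ∩ B)).toReal = (volume B).toReal := by
    have h : volume (A ∩ B) + volume (Aᶜ ∩ B) = volume B := by
      rw [Set.inter_comm A B, Set.inter_comm Aᶜ B, ← Set.diff_eq]
      exact measure_inter_add_diff B hA
    rw [← ENNReal.toReal_add hfinAB hfinAcB, h]
  have hpi := Real.pi_pos
  constructor
  · rw [hBvol]
    have heq : 1 / (4 * Real.pi) * (2 * Real.pi * lam ^ 2) = lam ^ 2 / 2 := by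
      field_simp; ring
    rw [heq]; exact hmono1
  · rw [hBvol]
    have heq : (1 - 1 / (4 * Real.pi)) * (2 * Real.pi * lam ^ 2)
        = 2 * Real.pi * lam ^ 2 - lam ^ 2 / 2 := by
      field_simp; ring
    rw [heq]
    rw [hBvol] at hsplitB
    linarith
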